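/- With the MCF construction (K^t from a sequence of partitions P^{t_1}, ..., P^{t_M} of a finite set X), the number of connected components of K^t equals the number of clusters #P^t if and only if the partition P^t is non-fractured, i.e., every earlier partition P^s (s ≤ t) refines P^t. -/

import Mathlib

open Finset

/-- The 1-skeleton graph of the MCF complex `K^T`: two distinct points are adjacent
iff they share a cluster in some partition of the sequence with scale `≤ T`. -/
def mcfGraph {X : Type*} [Fintype X] [DecidableEq X] {M : ℕ}
    (P : Fin M → Finpartition (univ : Finset X)) (t : Fin M → ℝ) (T : ℝ) :
    SimpleGraph X where
  Adj x y := x ≠ y ∧ ∃ s, t s ≤ T ∧ ∃ C ∈ (P s).parts, x ∈ C ∧ y ∈ C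
  symm := by
    constructor
    rintro x y ⟨hxy, s, hs, C, hC, hx, hy⟩
    exact ⟨hxy.symm, s, hs, C, hC, hy, hx⟩
  loopless := ⟨fun x h => h.1 rfl⟩

/-- Points in a common part of `P m` are reachable in the graph at scale `t m`. -/
lemma mcf_reachable_of_mem_part {X : Type*} [Fintype X] [DecidableEq X] {M : ℕ}
    (P : Fin M → Finpartition (univ : Finset X)) (t : Fin M → ℝ) (m : Fin M)
    {C : Finset X} (hC : C ∈ (P m).parts) {x y : X} (hx : x ∈ C) (hy : y ∈ C) :
    (mcfGraph P t (t m)).Reachable x y := by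
  rcases eq_or_ne x y with rfl | hxy
  · exact SimpleGraph.Reachable.refl x
  · exact SimpleGraph.Adj.reachable ⟨hxy, m, le_refl _, C, hC, hx, hy⟩

/-- Under the non-fractured assumption, reachability preserves the part of `P m`. -/
lemma mcf_mem_of_reachable {X : Type*} [Fintype X] [DecidableEq X] {M : ℕ}
    (P : Fin M → Finpartition (univ : Finset X)) (t : Fin M → ℝ) (m : Fin M)
    (hnf : ∀ s : Fin M, t s ≤ t m → P s ≤ P m)
    {x y : X} (h : (mcfGraph P t (t m)).Reachable x y)
    {D : Finset X} (hD : D ∈ (P m).parts) (hx : x ∈ D) : y ∈ D := by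
  rw [SimpleGraph.reachable_iff_reflTransGen] at h
  induction h with
  | refl => exact hx
  | tail _ hadj ih =>
    obtain ⟨hne, s, hs, C, hC, hb, hc⟩ := hadj
    obtain ⟨D', hD', hCD'⟩ := hnf s hs hC
    have : D = D' := (P m).eq_of_mem_parts hD hD' ih (hCD' hb)
    exact this ▸ hCD' hc

theorem mcf_components_eq_clusters_iff_nonfractured
    {X : Type*} [Fintype X] [DecidableEq X] {M : ℕ}
    (P : Fin M → Finpartition (univ : Finset X)) (t : Fin M → ℝ) (ht : StrictMono t)
    (m : Fin M) :
    Nat.card (mcfGraph P t (t m)).ConnectedComponent = (P m).parts.card ↔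
      ∀ s : Fin M, t s ≤ t m → P s ≤ P m := by
  classical
  set G := mcfGraph P t (t m) with hG
  -- the map from parts to connected components
  let f : {C // C ∈ (P m).parts} → G.ConnectedComponent := fun C =>
    G.connectedComponentMk ((P m).nonempty_of_mem_parts C.2).choose
  have hrep : ∀ C : {C // C ∈ (P m).parts},
      ((P m).nonempty_of_mem_parts C.2).choose ∈ (C : Finset X) := fun C =>
    ((P m).nonempty_of_mem_parts C.2).choose_spec
  have hfsurj : Function.Surjective f := by
    intro c
    obtain ⟨x, rfl⟩ := c.exists_rep
    obtain ⟨C, hC, hxC⟩ := (P m).exists_mem (mem_univ x)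
    refine ⟨⟨C, hC⟩, ?_⟩
    exact SimpleGraph.ConnectedComponent.sound
      (mcf_reachable_of_mem_part P t m hC (hrep ⟨C, hC⟩) hxC)
  have hcard : Nat.card {C // C ∈ (P m).parts} = (P m).parts.card := by
    simp [Nat.card_eq_fintype_card]
  constructor
  · -- equality of cardinalities implies non-fractured
    intro hcardeq
    by_contra hnot
    push_neg at hnot
    obtain ⟨s, hs, hle⟩ := hnot
    have hbij : Function.Bijective f :=
      Nat.bijective_iff_surjective_and_card f |>.mpr ⟨hfsurj, by rw [hcard, hcardeq]⟩
    -- extract a fractured part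
    have : ¬ ∀ ⦃b⦄, b ∈ (P s).parts → ∃ c ∈ (P m).parts, b ≤ c := hle
    push_neg at this
    obtain ⟨C, hC, hC'⟩ := this
    obtain ⟨x, hxC⟩ := (P s).nonempty_of_mem_parts hC
    obtain ⟨D, hD, hxD⟩ := (P m).exists_mem (mem_univ x)
    have : ¬ C ⊆ D := fun h => (hC' D hD h).elim
    obtain ⟨y, hyC, hyD⟩ := not_subset.mp this
    obtain ⟨D', hD', hyD'⟩ := (P m).exists_mem (mem_univ y)
    have hDD' : D ≠ D' := fun h => hyD (h ▸ hyD')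
    have hxy : x ≠ y := fun h => hyD (h ▸ hxD)
    have hreach : G.Reachable x y := SimpleGraph.Adj.reachable ⟨hxy, s, hs, C, hC, hxC, hyC⟩
    have : f ⟨D, hD⟩ = f ⟨D', hD'⟩ := by
      apply SimpleGraph.ConnectedComponent.sound
      exact ((mcf_reachable_of_mem_part P t m hD (hrep ⟨D, hD⟩) hxD).trans hreach).trans
        (mcf_reachable_of_mem_part P t m hD' hyD' (hrep ⟨D', hD'⟩))
    exact hDD' (congrArg Subtype.val (hbij.1 this))
  · -- non-fractured implies equality of cardinalities
    intro hnf
    have hfinj : Function.Injective f := by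
      rintro ⟨C, hC⟩ ⟨D, hD⟩ hfCD
      have hr : G.Reachable ((P m).nonempty_of_mem_parts hC).choose
          ((P m).nonempty_of_mem_parts hD).choose :=
        SimpleGraph.ConnectedComponent.exact hfCD
      have : ((P m).nonempty_of_mem_parts hD).choose ∈ C :=
        mcf_mem_of_reachable P t m hnf hr hC (hrep ⟨C, hC⟩)
      exact Subtype.ext ((P m).eq_of_mem_parts hC hD this (hrep ⟨D, hD⟩))
    rw [← hcard]
    exact (Nat.card_eq_of_bijective f ⟨hfinj, hfsurj⟩).symm
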